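/- Let G be a finite abelian group and suppose |G| = m_1 · m_2 · ⋯ · m_k, where k ≥ 3 and each m_i is an integer greater than 1. Then there exist subsets A_1, …, A_k of G that form a complete factorization of G with |A_i| = m_i for all i = 1, …, k. -/

import Mathlib

universe u

/-- Every finite abelian group has a subgroup of any order dividing the group order. -/
lemma aux_sub : ∀ (n : ℕ) (G : Type u) [CommGroup G] [Finite G] (d : ℕ), d ≤ n →
    d ∣ Nat.card G → ∃ K : Subgroup G, Nat.card K = d := by
  intro n
  induction n with
  | zero =>
    intro G _ _ d hd hdvd
    interval_cases d
    exact absurd (Nat.eq_zero_of_zero_dvd hdvd) Nat.card_pos.ne'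
  | succ n ih =>
    intro G _ _ d hd hdvd
    rcases eq_or_ne d 1 with rfl | hd1
    · exact ⟨⊥, Subgroup.card_bot⟩
    have hd0 : d ≠ 0 := by
      rintro rfl
      exact absurd (Nat.eq_zero_of_zero_dvd hdvd) Nat.card_pos.ne'
    obtain ⟨p, hp, hpd⟩ := Nat.exists_prime_and_dvd hd1
    have : Fact p.Prime := ⟨hp⟩
    obtain ⟨x, hx⟩ := exists_prime_orderOf_dvd_card' (G := G) p (hpd.trans hdvd)
    set P : Subgroup G := Subgroup.zpowers x with hP
    have hPcard : Nat.card P = p := by rw [Nat.card_zpowers, hx]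
    -- quotient
    have hGQ : Nat.card G = Nat.card (G ⧸ P) * p :=
      hPcard ▸ Subgroup.card_eq_card_quotient_mul_card_subgroup P
    have hdvd' : d / p ∣ Nat.card (G ⧸ P) := by
      obtain ⟨c, hc⟩ := hdvd
      refine ⟨c, ?_⟩
      have hp0 : p ≠ 0 := hp.ne_zero
      have := hGQ.symm.trans hc
      obtain ⟨e, he⟩ := hpd
      subst he
      rw [Nat.mul_div_cancel_left e hp.pos]
      nlinarith [hp.pos, Nat.card_pos (α := G ⧸ P)]
    have hlt : d / p ≤ n := by
      have : d / p < d := Nat.div_lt_self (Nat.pos_of_ne_zero hd0) hp.one_lt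
      omega
    obtain ⟨K', hK'⟩ := ih (G ⧸ P) (d / p) hlt hdvd'
    refine ⟨K'.comap (QuotientGroup.mk' P), ?_⟩
    have hsurj : Function.Surjective (QuotientGroup.mk' P) := QuotientGroup.mk'_surjective P
    have hidx : (K'.comap (QuotientGroup.mk' P)).index = K'.index :=
      Subgroup.index_comap_of_surjective _ hsurj
    have h1 := Subgroup.card_mul_index (K'.comap (QuotientGroup.mk' P))
    have h2 := Subgroup.card_mul_index K'
    have hidx0 : K'.index ≠ 0 := by
      intro h0
      rw [h0, mul_zero] at h2
      exact (Nat.card_pos (α := G ⧸ P)).ne' h2.symm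
    rw [hidx] at h1
    have : Nat.card (K'.comap (QuotientGroup.mk' P)) * K'.index = d * K'.index := by
      rw [h1, hGQ, ← h2, hK']
      have : p ∣ d := hpd
      obtain ⟨e, he⟩ := this
      subst he
      rw [Nat.mul_div_cancel_left e hp.pos]
      ring
    exact Nat.eq_of_mul_eq_mul_right (Nat.pos_of_ne_zero hidx0) this

/-- Every finite abelian group has a subgroup of any order dividing the group order. -/
lemma aux_exists_subgroup_card_eq {G : Type u} [CommGroup G] [Finite G]
    (d : ℕ) (hdvd : d ∣ Nat.card G) : ∃ K : Subgroup G, Nat.card K = d :=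
  aux_sub d G d le_rfl hdvd

/-- Existence of a chain of subgroups with prescribed cardinalities. -/
lemma aux_chain : ∀ (n : ℕ) (G : Type u) [CommGroup G] [Finite G] (c : ℕ → ℕ),
    Nat.card G = ∏ j ∈ Finset.range n, c j →
    ∃ H : ℕ → Subgroup G, Monotone H ∧ H 0 = ⊥ ∧ (∀ i, n ≤ i → H i = ⊤) ∧
      ∀ i ≤ n, Nat.card (H i) = ∏ j ∈ Finset.range i, c j := by
  intro n
  induction n with
  | zero =>
    intro G _ _ c hc
    simp only [Finset.range_zero, Finset.prod_empty] at hc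
    have hbot : (⊤ : Subgroup G) = ⊥ := by
      rw [← Subgroup.card_eq_one, Subgroup.card_top, hc]
    refine ⟨fun _ => ⊥, monotone_const, rfl, fun i _ => hbot.symm, fun i hi => ?_⟩
    interval_cases i
    simp [Subgroup.card_bot]
  | succ n ih =>
    intro G _ _ c hc
    rw [Finset.prod_range_succ] at hc
    obtain ⟨K, hK⟩ := aux_exists_subgroup_card_eq (G := G) (∏ j ∈ Finset.range n, c j)
      ⟨c n, hc⟩
    obtain ⟨H', hmono, h0, htop, hcard⟩ := ih ↥K c hK
    refine ⟨fun i => if i ≤ n then (H' i).map K.subtype else ⊤, ?_, ?_, ?_, ?_⟩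
    · intro i j hij
      by_cases hi : i ≤ n <;> by_cases hj : j ≤ n
      · simpa [hi, hj] using Subgroup.map_mono (f := K.subtype) (hmono hij)
      · simp [hi, hj, le_top]
      · omega
      · simp [hi, hj]
    · simp [h0]
    · intro i hi
      have : ¬ i ≤ n := by omega
      simp [this]
    · intro i hi
      by_cases h : i ≤ n
      · simp only [h, if_true]
        rw [Nat.card_congr ((H' i).equivMapOfInjective K.subtype K.subtype_injective).toEquiv.symm]
        exact hcard i h
      · have : i = n + 1 := by omega
        subst this
        simp only [h, if_false]
        rw [Subgroup.card_top, hc, Finset.prod_range_succ]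

/-- A relative transversal of `H` in `K` extending a partial system of representatives `P`
and avoiding a set `F`. -/
lemma aux_transversal {G : Type*} [CommGroup G] {H K : Subgroup G} (hHK : H ≤ K)
    (P F : Set G) (hPK : P ⊆ K)
    (hPd : ∀ p ∈ P, ∀ p' ∈ P, p * p'⁻¹ ∈ H → p = p')
    (hPF : ∀ p ∈ P, p ∉ F)
    (hF : ∀ g ∈ K, ∃ g' ∈ K, g * g'⁻¹ ∈ H ∧ g' ∉ F) :
    ∃ S : Set G, S ⊆ K ∧ (∀ g ∈ K, ∃! s, s ∈ S ∧ g * s⁻¹ ∈ H) ∧ P ⊆ S ∧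
      (∀ s ∈ S, s ∉ F) ∧ S.ncard * Nat.card H = Nat.card K := by
  classical
  set H' : Subgroup ↥K := H.subgroupOf K with hH'
  -- membership transfer
  have hmem : ∀ (a b : ↥K), (QuotientGroup.mk a : ↥K ⧸ H') = QuotientGroup.mk b ↔
      (a : G) * (b : G)⁻¹ ∈ H := by
    intro a b
    rw [QuotientGroup.eq]
    constructor
    · intro h
      have : ((a⁻¹ * b : ↥K) : G) ∈ H := h
      have h2 : (a : G)⁻¹ * b ∈ H := by simpa using this
      have := H.inv_mem h2
      simpa [mul_comm] using this
    · intro h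
      show ((a⁻¹ * b : ↥K) : G) ∈ H
      have := H.inv_mem h
      simp only [mul_inv_rev, inv_inv] at this
      simpa [mul_comm] using this
  have hex : ∀ q : ↥K ⧸ H', ∃ g : ↥K, QuotientGroup.mk g = q ∧
      ((∃ p : ↥K, (p : G) ∈ P ∧ QuotientGroup.mk p = q) → (g : G) ∈ P) ∧
      ((¬ ∃ p : ↥K, (p : G) ∈ P ∧ QuotientGroup.mk p = q) → (g : G) ∉ F) := by
    intro q
    by_cases h : ∃ p : ↥K, (p : G) ∈ P ∧ QuotientGroup.mk p = q
    · obtain ⟨p, hp, hpq⟩ := h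
      exact ⟨p, hpq, fun _ => hp, fun h' => absurd ⟨p, hp, hpq⟩ h'⟩
    · obtain ⟨g₀, hg₀⟩ := Quotient.exists_rep q
      obtain ⟨g', hg'K, hgg', hg'F⟩ := hF (g₀ : G) g₀.2
      refine ⟨⟨g', hg'K⟩, ?_, fun h' => absurd h' h, fun _ => hg'F⟩
      rw [← hg₀, hmem]
      have := H.inv_mem hgg'
      simpa [mul_comm] using this
  choose σ hσ1 hσ2 hσ3 using hex
  set S : Set G := Set.range (fun q => ((σ q : ↥K) : G)) with hS
  have hSsub : S ⊆ K := by rintro s ⟨q, rfl⟩; exact (σ q).2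
  have hRT : ∀ g ∈ K, ∃! s, s ∈ S ∧ g * s⁻¹ ∈ H := by
    intro g hg
    refine ⟨(σ (QuotientGroup.mk ⟨g, hg⟩) : ↥K), ⟨⟨_, rfl⟩, ?_⟩, ?_⟩
    · rw [← hmem ⟨g, hg⟩ _, hσ1]
    · rintro s ⟨⟨q, rfl⟩, hs2⟩
      have : (QuotientGroup.mk (⟨g, hg⟩ : ↥K) : ↥K ⧸ H') = QuotientGroup.mk (σ q) := by
        rw [hmem]; exact hs2
      rw [hσ1] at this
      rw [← this]
  have hPS : P ⊆ S := by
    intro p hp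
    have hpK := hPK hp
    set q : ↥K ⧸ H' := QuotientGroup.mk ⟨p, hpK⟩ with hq
    have h1 : (σ q : G) ∈ P := hσ2 q ⟨⟨p, hpK⟩, hp, rfl⟩
    have h2 : p * (σ q : G)⁻¹ ∈ H := by
      rw [← hmem ⟨p, hpK⟩ _, hσ1]
    have := hPd p hp _ h1 h2
    exact this ▸ ⟨q, rfl⟩
  have hSF : ∀ s ∈ S, s ∉ F := by
    rintro s ⟨q, rfl⟩
    by_cases h : ∃ p : ↥K, (p : G) ∈ P ∧ QuotientGroup.mk p = q
    · exact hPF _ (hσ2 q h)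
    · exact hσ3 q h
  have hcard : S.ncard * Nat.card H = Nat.card K := by
    have hinj : Function.Injective (fun q : ↥K ⧸ H' => ((σ q : ↥K) : G)) := by
      intro q q' h
      have : σ q = σ q' := Subtype.ext h
      rw [← hσ1 q, ← hσ1 q', this]
    have h1 : S.ncard = Nat.card (↥K ⧸ H') := by
      rw [← Nat.card_coe_set_eq, hS, Nat.card_range_of_injective hinj]
    have h2 : Nat.card H' = Nat.card H :=
      Nat.card_congr (Subgroup.subgroupOfEquivOfLe hHK).toEquiv
    rw [h1, ← h2, ← Subgroup.card_eq_card_quotient_mul_card_subgroup H']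
  exact ⟨S, hSsub, hRT, hPS, hSF, hcard⟩

/-- Unique factorization along a chain of subgroups with relative transversals. -/
lemma aux_factor {G : Type*} [CommGroup G] (H : ℕ → Subgroup G) (S : ℕ → Set G)
    (hMono : Monotone H) (h0 : H 0 = ⊥) :
    ∀ n, (∀ i < n, S i ⊆ H (i + 1)) →
    (∀ i < n, ∀ g ∈ H (i + 1), ∃! s, s ∈ S i ∧ g * s⁻¹ ∈ H i) →
    ∀ g ∈ H n, ∃! f : Fin n → G, (∀ i : Fin n, f i ∈ S (i : ℕ)) ∧ (List.ofFn f).prod = g := by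
  intro n
  induction n with
  | zero =>
    intro _ _ g hg
    rw [h0] at hg
    refine ⟨fun i => i.elim0, ⟨fun i => i.elim0, ?_⟩, fun f' _ => funext fun i => i.elim0⟩
    simpa using hg.symm
  | succ n ih =>
    intro hsub hRT g hg
    obtain ⟨s, ⟨hsS, hsH⟩, hsu⟩ := hRT n (by omega) g hg
    obtain ⟨f', ⟨hf'S, hf'p⟩, hf'u⟩ := ih (fun i hi => hsub i (by omega))
      (fun i hi => hRT i (by omega)) (g * s⁻¹) hsH
    have hprod : ∀ f : Fin (n + 1) → G,
        (List.ofFn f).prod = (List.ofFn (f ∘ Fin.castSucc)).prod * f (Fin.last n) := by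
      intro f
      rw [List.ofFn_succ']
      simp [Function.comp_def]
    refine ⟨Fin.snoc f' s, ⟨?_, ?_⟩, ?_⟩
    · intro i
      refine Fin.lastCases ?_ (fun j => ?_) i
      · simpa using hsS
      · simpa [Fin.snoc_castSucc] using hf'S j
    · rw [hprod]
      simp only [Fin.snoc_last]
      have : (Fin.snoc f' s : Fin (n+1) → G) ∘ Fin.castSucc = f' := by
        funext j; simp
      rw [this, hf'p]
      simp
    · rintro f ⟨hfS, hfp⟩
      -- first: the product of the first n entries is in H n
      have hinit : (List.ofFn (f ∘ Fin.castSucc)).prod ∈ H n := by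
        apply Subgroup.list_prod_mem
        intro x hx
        simp only [List.mem_ofFn] at hx
        obtain ⟨j, rfl⟩ := hx
        have h1 : f j.castSucc ∈ S (j : ℕ) := hfS j.castSucc
        exact hMono (Nat.succ_le_of_lt j.isLt) (hsub (j : ℕ) (by omega) h1)
      have hlastH : g * (f (Fin.last n))⁻¹ ∈ H n := by
        rw [← hfp, hprod f]
        simpa using hinit
      have hlast : f (Fin.last n) = s := hsu _ ⟨hfS (Fin.last n), hlastH⟩
      have hrest : f ∘ Fin.castSucc = f' := by
        apply hf'u
        refine ⟨fun j => hfS j.castSucc, ?_⟩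
        have h2 := hprod f
        rw [hfp, hlast] at h2
        rw [h2]
        group
      funext i
      refine Fin.lastCases ?_ (fun j => ?_) i
      · simpa using hlast
      · rw [Fin.snoc_castSucc, ← hrest]
        rfl

lemma aux_prod_head {G : Type*} [CommGroup G] {n : ℕ} (t : G) (f : Fin n → G) (hn : 0 < n) :
    (List.ofFn (fun i => if (i : ℕ) = 0 then t * f i else f i)).prod = t * (List.ofFn f).prod := by
  obtain ⟨n', rfl⟩ : ∃ n', n = n' + 1 := ⟨n - 1, by omega⟩
  rw [List.ofFn_succ, List.ofFn_succ (f := f)]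
  simp only [Fin.val_zero, if_true, Fin.val_succ, Nat.succ_ne_zero, if_false]
  rw [List.prod_cons, List.prod_cons, mul_assoc]

/-- Subsets `A 0, …, A (k-1)` of a group `G` form a complete factorization of `G` if they are
pairwise disjoint and every element `g ∈ G` is uniquely represented as
`g = a_0 * a_1 * ⋯ * a_(k-1)` with `a_i ∈ A i` for each `i`. -/
def IsCompleteFactorization {G : Type*} [Group G] {k : ℕ} (A : Fin k → Set G) : Prop :=
  (∀ i j : Fin k, i ≠ j → Disjoint (A i) (A j)) ∧
  ∀ g : G, ∃! f : Fin k → G, (∀ i, f i ∈ A i) ∧ (List.ofFn f).prod = g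

/-- Let `G` be a finite abelian group and suppose `|G| = m_1 ⋯ m_k` where `k ≥ 3` and each
`m_i > 1`. Then there exist subsets `A_1, …, A_k` of `G` forming a complete factorization of `G`
with `|A_i| = m_i` for all `i`. -/
theorem complete_factorization_of_abelian {G : Type*} [CommGroup G] [Finite G]
    {k : ℕ} (hk : 3 ≤ k) (m : Fin k → ℕ) (hm : ∀ i, 1 < m i)
    (hcard : Nat.card G = ∏ i, m i) :
    ∃ A : Fin k → Set G, IsCompleteFactorization A ∧ ∀ i, (A i).ncard = m i := by
  classical
  -- extend m to ℕ
  set m' : ℕ → ℕ := fun j => if h : j < k then m ⟨j, h⟩ else 1 with hm'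
  have hm'eq : ∀ i : Fin k, m' (i : ℕ) = m i := by
    intro i; simp [hm', i.isLt]
  have hm'2 : ∀ j < k, 2 ≤ m' j := by
    intro j hj; have := hm ⟨j, hj⟩; simp [hm', hj]; omega
  set N : ℕ → ℕ := fun i => ∏ j ∈ Finset.range i, m' j with hN
  have hNpos : ∀ i, 0 < N i := by
    intro i
    apply Finset.prod_pos
    intro j _
    by_cases h : j < k
    · exact lt_of_lt_of_le Nat.zero_lt_two (hm'2 j h)
    · simp [hm', h]
  have hNsucc : ∀ i, N (i + 1) = N i * m' i := by
    intro i; rw [hN]; exact Finset.prod_range_succ m' i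
  have hNlt : ∀ i j, i < j → i < k → N i < N j := by
    intro i j hij hik
    have key : N j = N i * ∏ x ∈ Finset.range (j - i), m' (i + x) := by
      have h := Finset.prod_range_add m' i (j - i)
      rw [show i + (j - i) = j by omega] at h
      exact h
    have h0mem : (0 : ℕ) ∈ Finset.range (j - i) := by simp; omega
    have h1 : ∀ l ∈ Finset.range (j - i), 1 ≤ m' (i + l) := by
      intro l _
      by_cases h : i + l < k
      · exact le_trans one_le_two (hm'2 _ h)
      · simp [hm', h]
    have h2 : m' (i + 0) ≤ ∏ x ∈ Finset.range (j - i), m' (i + x) :=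
      Finset.single_le_prod' h1 h0mem
    have h3 : 2 ≤ m' (i + 0) := by simpa using hm'2 i hik
    nlinarith [hNpos i, key]
  have hc : Nat.card G = ∏ j ∈ Finset.range k, m' j := by
    rw [hcard, ← Fin.prod_univ_eq_prod_range]
    exact (Finset.prod_congr rfl fun i _ => (hm'eq i).symm)
  -- the chain
  obtain ⟨H, hMono, h0, htop, hcards'⟩ := aux_chain k G m' hc
  have hcards : ∀ i ≤ k, Nat.card (H i) = N i := hcards'
  -- elements in successive differences
  have hne : ∀ i j, i < j → j ≤ k → ∃ g ∈ H j, g ∉ H i := by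
    intro i j hij hjk
    by_contra hcon
    push_neg at hcon
    have hle : H j ≤ H i := hcon
    have heq : H i = H j := le_antisymm (hMono (le_of_lt hij)) hle
    have h1 : N i < N j := hNlt i j hij (by omega)
    rw [← hcards i (by omega), ← hcards j hjk, heq] at h1
    omega
  -- stratum elements x i ∈ H i \ H (i-1) for 1 ≤ i ≤ k-1
  have hxex : ∀ i : ℕ, ∃ v : G, 1 ≤ i → i ≤ k - 1 → v ∈ H i ∧ v ∉ H (i - 1) := by
    intro i
    by_cases h : 1 ≤ i ∧ i ≤ k - 1
    · obtain ⟨g, hg1, hg2⟩ := hne (i - 1) i (by omega) (by omega)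
      exact ⟨g, fun _ _ => ⟨hg1, hg2⟩⟩
    · exact ⟨1, fun h1 h2 => absurd ⟨h1, h2⟩ h⟩
  choose x hx using hxex
  have hxmem : ∀ i, 1 ≤ i → i ≤ k - 1 → x i ∈ H i := fun i h1 h2 => (hx i h1 h2).1
  have hxnot : ∀ i, 1 ≤ i → i ≤ k - 1 → x i ∉ H (i - 1) := fun i h1 h2 => (hx i h1 h2).2
  -- t ∉ H (k-1), w ∈ H (k-1) \ H 1
  obtain ⟨t, htK, htn⟩ := hne (k - 1) k (by omega) le_rfl
  obtain ⟨w, hwK, hwn⟩ := hne 1 (k - 1) (by omega) (by omega)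
  -- nontrivial elements of H i for i ≥ 1
  have hnontriv : ∀ i, 1 ≤ i → ∃ h ∈ H i, h ≠ 1 := by
    intro i hi
    obtain ⟨g, hg1, hg2⟩ := hne 0 (min i (k-1)) (by omega) (by omega)
    refine ⟨g, hMono (by omega) hg1, ?_⟩
    intro h1
    rw [h1] at hg2
    exact hg2 (Subgroup.one_mem _)
  -- construct the transversals
  have hSex : ∀ i : ℕ, ∃ S : Set G,
      (i < k → (S ⊆ H (i + 1) ∧ (∀ g ∈ H (i + 1), ∃! s, s ∈ S ∧ g * s⁻¹ ∈ H i) ∧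
        S.ncard * Nat.card (H i) = Nat.card (H (i + 1)))) ∧
      (1 ≤ i → i ≤ k - 2 → (x i ∈ S ∧ x (i + 1) ∉ S)) ∧
      (i = k - 1 → (x (k - 1) ∈ S ∧ t * w ∈ S)) := by
    intro i
    rcases Nat.lt_or_ge i k with hik | hik
    swap
    · -- i ≥ k : junk
      exact ⟨∅, fun h => absurd h (by omega), fun h1 h2 => absurd hik (by omega),
        fun h => absurd hik (by omega)⟩
    rcases Nat.eq_zero_or_pos i with rfl | hi1
    · -- i = 0 : S = H 1
      refine ⟨(H 1 : Set G), fun _ => ⟨subset_rfl, ?_, ?_⟩, fun h => absurd h (by omega),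
        fun h => absurd h (by omega)⟩
      · intro g hg
        refine ⟨g, ⟨hg, by simp [h0]⟩, ?_⟩
        rintro s ⟨hs1, hs2⟩
        rw [h0, Subgroup.mem_bot] at hs2
        exact (mul_inv_eq_one.mp hs2).symm
      · rw [h0, Subgroup.card_bot, mul_one, ← Nat.card_coe_set_eq, SetLike.coe_sort_coe]
    rcases Nat.lt_or_ge i (k - 1) with hik1 | hik1
    · -- 1 ≤ i ≤ k - 2 : transversal of H i in H (i+1) through x i avoiding x (i+1)
      obtain ⟨hnt, hntH, hnt1⟩ := hnontriv i hi1
      obtain ⟨S, hS1, hS2, hS3, hS4, hS5⟩ := aux_transversal (hMono (le_of_lt (Nat.lt_succ_self i)))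
        {x i} {x (i + 1)}
        (by
          intro p hp
          rw [Set.mem_singleton_iff] at hp
          subst hp
          exact hMono (Nat.le_succ i) (hxmem i hi1 (by omega)))
        (by
          intro p hp p' hp' _
          rw [Set.mem_singleton_iff] at hp hp'
          rw [hp, hp'])
        (by
          intro p hp
          rw [Set.mem_singleton_iff] at hp
          subst hp
          rw [Set.mem_singleton_iff]
          intro heq
          apply hxnot (i + 1) (by omega) (by omega)
          rw [← heq]
          simpa using hxmem i hi1 (by omega))
        (by
          intro g hg
          by_cases hgx : g = x (i + 1)
          · refine ⟨g * hnt, Subgroup.mul_mem _ hg (hMono (Nat.le_succ i) hntH), ?_, ?_⟩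
            · have : g * (g * hnt)⁻¹ = hnt⁻¹ := by
                simp [mul_comm, mul_left_comm, mul_assoc]
              rw [this]
              exact Subgroup.inv_mem _ hntH
            · rw [Set.mem_singleton_iff, ← hgx]
              intro heq
              exact hnt1 (by
                have := heq.symm
                simp at this
                exact this)
          · exact ⟨g, hg, by simpa using Subgroup.one_mem (H i), by simpa using hgx⟩)
      refine ⟨S, fun _ => ⟨hS1, hS2, hS5⟩, fun _ _ => ⟨hS3 rfl, fun hmem => hS4 _ hmem rfl⟩,
        fun h => by omega⟩
    · -- i = k - 1 : transversal of H (k-1) in H k = ⊤ through x (k-1) and t * w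
      have hieq : i = k - 1 := by omega
      subst hieq
      have hksucc : k - 1 + 1 = k := by omega
      have hle : H (k - 1) ≤ H (k - 1 + 1) := hMono (Nat.le_succ _)
      have htK' : t ∈ H (k - 1 + 1) := by rw [hksucc]; exact htK
      have hwK' : w ∈ H (k - 1) := hwK
      obtain ⟨S, hS1, hS2, hS3, hS4, hS5⟩ := aux_transversal hle
        {x (k - 1), t * w} ∅
        (by
          rintro p (rfl | rfl)
          · exact hle (hxmem (k - 1) (by omega) le_rfl)
          · exact Subgroup.mul_mem _ htK' (hle hwK'))
        (by
          rintro p (rfl | rfl) p' (rfl | rfl) hrel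
          · rfl
          · exfalso
            apply htn
            have h1 : x (k - 1) * (t * w)⁻¹ ∈ H (k - 1) := hrel
            have h2 : x (k - 1) ∈ H (k - 1) := hxmem (k - 1) (by omega) le_rfl
            have h3 : t⁻¹ ∈ H (k - 1) := by
              have : t⁻¹ = (x (k-1))⁻¹ * (x (k - 1) * (t * w)⁻¹) * w := by
                simp [mul_comm, mul_left_comm, mul_assoc]
              rw [this]
              exact Subgroup.mul_mem _ (Subgroup.mul_mem _ (Subgroup.inv_mem _ h2) h1) hwK'
            simpa using Subgroup.inv_mem _ h3
          · exfalso
            apply htn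
            have h1 : t * w * (x (k - 1))⁻¹ ∈ H (k - 1) := hrel
            have h2 : x (k - 1) ∈ H (k - 1) := hxmem (k - 1) (by omega) le_rfl
            have : t = (t * w * (x (k-1))⁻¹) * x (k - 1) * w⁻¹ := by
              simp [mul_comm, mul_left_comm, mul_assoc]
            rw [this]
            exact Subgroup.mul_mem _ (Subgroup.mul_mem _ h1 h2) (Subgroup.inv_mem _ hwK')
          · rfl)
        (by rintro p _ hF; exact hF)
        (by
          intro g hg
          exact ⟨g, hg, by simpa using Subgroup.one_mem (H (k - 1)), Set.notMem_empty g⟩)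
      refine ⟨S, fun _ => ⟨hS1, hS2, hS5⟩, fun _ h2 => by omega,
        fun _ => ⟨hS3 (by simp), hS3 (by simp)⟩⟩
  choose S hSmain hSmid hStop using hSex
  have hSsub : ∀ i < k, S i ⊆ (H (i + 1) : Set G) := fun i h => ((hSmain i) h).1
  have hSRT : ∀ i < k, ∀ g ∈ H (i + 1), ∃! s, s ∈ S i ∧ g * s⁻¹ ∈ H i :=
    fun i h => ((hSmain i) h).2.1
  have hScard : ∀ i < k, (S i).ncard * Nat.card (H i) = Nat.card (H (i + 1)) :=
    fun i h => ((hSmain i) h).2.2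
  have huniq : ∀ i < k, ∀ s ∈ S i, ∀ s' ∈ S i, s * s'⁻¹ ∈ H i → s = s' := by
    intro i hik s hs s' hs' hrel
    obtain ⟨c, _, hu⟩ := hSRT i hik s (hSsub i hik hs)
    have h1 : s = c := hu s ⟨hs, by simpa using Subgroup.one_mem (H i)⟩
    have h2 : s' = c := hu s' ⟨hs', hrel⟩
    rw [h1, h2]
  set A : Fin k → Set G := fun i => if (i : ℕ) = 0 then (fun u => t * u) '' S 0 else S (i : ℕ)
    with hA
  -- the cross-index disjointness, for natural number indices
  have hdisj : ∀ i j : Fin k, (i : ℕ) < (j : ℕ) → ∀ a, a ∈ A i → a ∈ A j → False := by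
    intro i j hij a hai haj
    have hjk : (j : ℕ) < k := j.isLt
    have hj1 : 1 ≤ (j : ℕ) := by omega
    have haj' : a ∈ S (j : ℕ) := by
      rw [hA] at haj
      simpa [show ¬((j : ℕ) = 0) by omega] using haj
    by_cases hi0 : (i : ℕ) = 0
    · -- A i = t '' S 0
      rw [hA] at hai
      simp only [hi0, if_true] at hai
      obtain ⟨u, hu, rfl⟩ := hai
      have huH : u ∈ H 1 := hSsub 0 (by omega) hu
      by_cases hjtop : (j : ℕ) = k - 1
      · -- a = t * w forced, contradiction with w ∉ H 1
        rw [hjtop] at haj'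
        have hrel : (t * u) * (t * w)⁻¹ ∈ H (k - 1) := by
          have : (t * u) * (t * w)⁻¹ = u * w⁻¹ := by
            rw [← div_eq_mul_inv, ← div_eq_mul_inv, mul_div_mul_left_eq_div]
          rw [this]
          exact Subgroup.mul_mem _ (hMono (by omega) huH) (Subgroup.inv_mem _ hwK)
        have htw : t * w ∈ S (k - 1) := (hStop (k - 1) rfl).2
        have : t * u = t * w := huniq (k - 1) (by omega) _ haj' _ htw hrel
        exact hwn ((mul_left_cancel this) ▸ huH)
      · -- S j ⊆ H (k-1), so t ∈ H (k-1), contradiction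
        have : t * u ∈ H (k - 1) := hMono (by omega) (hSsub (j : ℕ) hjk haj')
        apply htn
        have h2 : u ∈ H (k - 1) := hMono (by omega) huH
        have : t = (t * u) * u⁻¹ := by simp [mul_assoc]
        rw [this]
        exact Subgroup.mul_mem _ ‹t * u ∈ H (k - 1)› (Subgroup.inv_mem _ h2)
    · -- 1 ≤ i < j
      have hi1 : 1 ≤ (i : ℕ) := by omega
      have hai' : a ∈ S (i : ℕ) := by
        rw [hA] at hai
        simpa [hi0] using hai
      have haHi : a ∈ H ((i : ℕ) + 1) := hSsub (i : ℕ) i.isLt hai'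
      by_cases hjtop : (j : ℕ) = k - 1
      · have haH : a ∈ H (k - 1) := hMono (by omega) haHi
        rw [hjtop] at haj'
        have hxS : x (k - 1) ∈ S (k - 1) := (hStop (k - 1) rfl).1
        have hrel : a * (x (k - 1))⁻¹ ∈ H (k - 1) :=
          Subgroup.mul_mem _ haH (Subgroup.inv_mem _ (hxmem (k - 1) (by omega) le_rfl))
        have hax : a = x (k - 1) := huniq (k - 1) (by omega) _ haj' _ hxS hrel
        by_cases hilast : (i : ℕ) = k - 2
        · -- x (k-1) ∉ S (k-2)
          have hnot := (hSmid (i : ℕ) hi1 (by omega)).2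
          rw [show (i : ℕ) + 1 = k - 1 by omega] at hnot
          exact hnot (hax ▸ hai')
        · -- x (k-1) ∈ H (k-2), contradiction
          apply hxnot (k - 1) (by omega) le_rfl
          rw [show k - 1 - 1 = k - 2 by omega]
          rw [hax] at haHi
          exact hMono (by omega) haHi
      · -- j ≤ k - 2
        have hjk2 : (j : ℕ) ≤ k - 2 := by omega
        have haHj : a ∈ H (j : ℕ) := hMono (by omega) haHi
        have hxS : x (j : ℕ) ∈ S (j : ℕ) := (hSmid (j : ℕ) hj1 hjk2).1
        have hrel : a * (x (j : ℕ))⁻¹ ∈ H (j : ℕ) :=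
          Subgroup.mul_mem _ haHj (Subgroup.inv_mem _ (hxmem (j : ℕ) hj1 (by omega)))
        have hax : a = x (j : ℕ) := huniq (j : ℕ) hjk _ haj' _ hxS hrel
        by_cases hsucc : (j : ℕ) = (i : ℕ) + 1
        · have hnot := (hSmid (i : ℕ) hi1 (by omega)).2
          rw [← hsucc] at hnot
          exact hnot (hax ▸ hai')
        · apply hxnot (j : ℕ) hj1 (by omega)
          rw [hax] at haHi
          exact hMono (by omega) haHi
  -- unique factorization
  have hfact := aux_factor H S hMono h0 k (fun i hi => hSsub i hi) (fun i hi => hSRT i hi)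
  refine ⟨A, ⟨?_, ?_⟩, ?_⟩
  · -- pairwise disjointness
    intro i j hij
    rw [Set.disjoint_left]
    intro a hai haj
    rcases Nat.lt_trichotomy (i : ℕ) (j : ℕ) with h | h | h
    · exact hdisj i j h a hai haj
    · exact hij (Fin.ext h)
    · exact hdisj j i h a haj hai
  · -- unique representation
    intro g
    have hgH : t⁻¹ * g ∈ H k := by rw [htop k le_rfl]; exact Subgroup.mem_top _
    obtain ⟨f', ⟨hf'S, hf'p⟩, hf'u⟩ := hfact (t⁻¹ * g) hgH
    refine ⟨fun i => if (i : ℕ) = 0 then t * f' i else f' i, ⟨?_, ?_⟩, ?_⟩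
    · intro i
      by_cases h : (i : ℕ) = 0
      · rw [hA]
        simp only [h, if_true]
        exact ⟨f' i, h ▸ hf'S i, rfl⟩
      · rw [hA]
        simp only [h, if_false]
        exact hf'S i
    · rw [aux_prod_head t f' (by omega), hf'p]
      simp [mul_assoc]
    · rintro f₂ ⟨hf₂S, hf₂p⟩
      have hf₂'S : ∀ i : Fin k, (if (i : ℕ) = 0 then t⁻¹ * f₂ i else f₂ i) ∈ S (i : ℕ) := by
        intro i
        by_cases h : (i : ℕ) = 0
        · have := hf₂S i
          rw [hA] at this
          simp only [h, if_true] at this ⊢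
          obtain ⟨u, hu, heq⟩ := this
          rw [← heq]
          have : t⁻¹ * (t * u) = u := by simp [mul_assoc]
          rw [this]
          exact h ▸ hu
        · have := hf₂S i
          rw [hA] at this
          simp only [h, if_false] at this ⊢
          exact this
      have hf₂'p : (List.ofFn (fun i => if (i : ℕ) = 0 then t⁻¹ * f₂ i else f₂ i)).prod
          = t⁻¹ * g := by
        rw [aux_prod_head t⁻¹ f₂ (by omega), hf₂p]
      have hkey : (fun i : Fin k => if (i : ℕ) = 0 then t⁻¹ * f₂ i else f₂ i) = f' :=
        hf'u _ ⟨hf₂'S, hf₂'p⟩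
      funext i
      by_cases h : (i : ℕ) = 0
      · simp only [h, if_true]
        have := congrFun hkey i
        simp only [h, if_true] at this
        rw [← this]
        simp [mul_assoc]
      · simp only [h, if_false]
        have := congrFun hkey i
        simp only [h, if_false] at this
        rw [← this]
  · -- cardinalities
    intro i
    by_cases h : (i : ℕ) = 0
    · rw [hA]
      simp only [h, if_true]
      rw [Set.ncard_image_of_injective _ (mul_right_injective t)]
      have h1 := hScard 0 (by omega)
      rw [h0, Subgroup.card_bot, mul_one] at h1
      rw [h1, hcards 1 (by omega)]
      have : N 1 = m' 0 := by
        rw [hN]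
        simp [Finset.prod_range_one]
      rw [this, ← h, hm'eq i]
    · rw [hA]
      simp only [h, if_false]
      have h1 := hScard (i : ℕ) i.isLt
      rw [hcards (i : ℕ) (by omega), hcards ((i : ℕ) + 1) (by omega), hNsucc] at h1
      have h2 : (S (i : ℕ)).ncard * N (i : ℕ) = m' (i : ℕ) * N (i : ℕ) := by
        rw [h1]; ring
      have := Nat.eq_of_mul_eq_mul_right (hNpos (i : ℕ)) h2
      rw [this, hm'eq i]
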